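/- Let L be a ℤ-graded Lie algebra, V a ℤ-graded L-module, and T ⊆ L_0 a torus acting on L and V with weight space decompositions L = ⊕_α L_α and V = ⊕_β V_β. If φ ∈ Der(L, V) is a weight-derivation of nonzero weight α ≠ 0, then φ is inner; consequently every derivation from L to V is congruent to a zero-weight derivation modulo inner derivations. -/

import Mathlib

section WDIAux

variable {F U : Type} [Field F] [AddCommGroup U] [Module F U]

lemma wdi_pow_mem (D : Module.End F U) (S : Submodule F U) (hS : ∀ u ∈ S, D u ∈ S)
    (n : ℕ) {s : U} (hs : s ∈ S) : (D ^ n) s ∈ S := by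
  induction n with
  | zero => simpa using hs
  | succ n ih => rw [pow_succ']; exact hS _ ih

lemma wdi_aeval_mem (D : Module.End F U) (S : Submodule F U) (hS : ∀ u ∈ S, D u ∈ S)
    (p : Polynomial F) {s : U} (hs : s ∈ S) : Polynomial.aeval D p s ∈ S := by
  induction p using Polynomial.induction_on' with
  | add p q hp hq => rw [map_add]; exact S.add_mem hp hq
  | monomial n a =>
      rw [Polynomial.aeval_monomial]
      simpa [Module.algebraMap_end_apply] using S.smul_mem a (wdi_pow_mem D S hS n hs)

lemma wdi_pow_eig (D : Module.End F U) {μ : F} {u : U} (hu : D u = μ • u) (n : ℕ) :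
    (D ^ n) u = μ ^ n • u := by
  induction n with
  | zero => simp
  | succ n ih => rw [pow_succ', pow_succ']; simp [Module.End.mul_apply, ih, hu, smul_smul, mul_comm]

lemma wdi_aeval_eig (D : Module.End F U) {μ : F} {u : U} (hu : D u = μ • u) (p : Polynomial F) :
    Polynomial.aeval D p u = p.eval μ • u := by
  induction p using Polynomial.induction_on' with
  | add p q hp hq => rw [map_add]; simp [hp, hq, add_smul]
  | monomial n a =>
      rw [Polynomial.aeval_monomial]
      simp [Module.algebraMap_end_apply, wdi_pow_eig D hu n, smul_smul,
        Polynomial.eval_monomial, mul_comm]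

lemma wdi_keyA (D : Module.End F U) (S : Submodule F U) (hS : ∀ u ∈ S, D u ∈ S)
    (hdiag : ∀ u : U, u ∈ ⨆ μ : F, D.eigenspace μ)
    {s : U} (hs : s ∈ S) :
    ∃ a ∈ S, D a = 0 ∧ ∃ b ∈ S, s = a + D b := by
  classical
  obtain ⟨c, hc, hsum⟩ := (Submodule.mem_iSup_iff_exists_finsupp _ _).mp (hdiag s)
  have heig : ∀ μ, D (c μ) = μ • c μ := fun μ => Module.End.mem_eigenspace_iff.mp (hc μ)
  have hcS : ∀ μ ∈ c.support, c μ ∈ S := by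
    intro μ hμ
    have hinj : Set.InjOn (id : F → F) c.support := fun a _ b _ h => h
    have key : Polynomial.aeval D (Lagrange.basis c.support id μ) s = c μ := by
      rw [← hsum, Finsupp.sum, map_sum]
      rw [Finset.sum_eq_single_of_mem μ hμ]
      · rw [wdi_aeval_eig D (heig μ),
          show Polynomial.eval μ (Lagrange.basis c.support id μ) = 1 from
            Lagrange.eval_basis_self hinj hμ, one_smul]
      · intro ν hν hne
        rw [wdi_aeval_eig D (heig ν),
          show Polynomial.eval ν (Lagrange.basis c.support id μ) = 0 from
            Lagrange.eval_basis_of_ne (v := (id : F → F)) (fun h => hne h.symm) hν, zero_smul]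
    rw [← key]
    exact wdi_aeval_mem D S hS _ hs
  refine ⟨∑ μ ∈ c.support.filter (fun μ => μ = 0), c μ, ?_, ?_,
    ∑ μ ∈ c.support.filter (fun μ => ¬ μ = 0), μ⁻¹ • c μ, ?_, ?_⟩
  · exact Submodule.sum_mem S (fun μ hμ => hcS μ (Finset.mem_filter.mp hμ).1)
  · rw [map_sum]
    refine Finset.sum_eq_zero (fun μ hμ => ?_)
    obtain ⟨_, rfl⟩ := Finset.mem_filter.mp hμ
    rw [heig, zero_smul]
  · exact Submodule.sum_mem S (fun μ hμ => S.smul_mem _ (hcS μ (Finset.mem_filter.mp hμ).1))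
  · rw [map_sum]
    have : ∀ μ ∈ c.support.filter (fun μ => ¬ μ = 0), D (μ⁻¹ • c μ) = c μ := by
      intro μ hμ
      obtain ⟨_, hne⟩ := Finset.mem_filter.mp hμ
      rw [map_smul, heig, smul_smul, inv_mul_cancel₀ hne, one_smul]
    rw [Finset.sum_congr rfl this, Finset.sum_filter_add_sum_filter_not]
    rw [← hsum, Finsupp.sum]

lemma wdi_keyB : ∀ (l : List (Module.End F U)) (S I : Submodule F U),
    (∀ D ∈ l, ∀ E ∈ l, Commute D E) →
    (∀ D ∈ l, ∀ u : U, u ∈ ⨆ μ : F, D.eigenspace μ) →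
    (∀ D ∈ l, ∀ u ∈ S, D u ∈ S) →
    (∀ D ∈ l, ∀ u ∈ S, D u ∈ I) →
    ∀ s ∈ S, ∃ a ∈ S, (∀ D ∈ l, D a = 0) ∧ s - a ∈ I := by
  intro l
  induction l with
  | nil => exact fun S I _ _ _ _ s hs => ⟨s, hs, by simp, by simp⟩
  | cons D l ih =>
    intro S I hcomm hdiag hSinv hSI s hs
    have hDl : D ∈ D :: l := List.mem_cons_self
    obtain ⟨a, haS, haD0, b, hbS, hab⟩ := wdi_keyA D S (hSinv D hDl) (hdiag D hDl) hs
    have haS' : a ∈ S ⊓ LinearMap.ker D := Submodule.mem_inf.mpr ⟨haS, haD0⟩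
    have hS'inv : ∀ E ∈ l, ∀ u ∈ S ⊓ LinearMap.ker D, E u ∈ S ⊓ LinearMap.ker D := by
      intro E hE u hu
      obtain ⟨hu1, hu2⟩ := Submodule.mem_inf.mp hu
      refine Submodule.mem_inf.mpr ⟨hSinv E (List.mem_cons_of_mem D hE) u hu1, ?_⟩
      have hce := hcomm D hDl E (List.mem_cons_of_mem D hE)
      have : D (E u) = E (D u) := by
        rw [← Module.End.mul_apply, ← Module.End.mul_apply, hce]
      rw [LinearMap.mem_ker, this, LinearMap.mem_ker.mp hu2, map_zero]
    obtain ⟨a', ha'S', ha'0, ha'I⟩ := ih (S ⊓ LinearMap.ker D) I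
      (fun E hE E' hE' => hcomm E (List.mem_cons_of_mem D hE) E' (List.mem_cons_of_mem D hE'))
      (fun E hE => hdiag E (List.mem_cons_of_mem D hE))
      hS'inv
      (fun E hE u hu => hSI E (List.mem_cons_of_mem D hE) u (Submodule.mem_inf.mp hu).1)
      a haS'
    obtain ⟨ha'S, ha'K⟩ := Submodule.mem_inf.mp ha'S'
    refine ⟨a', ha'S, ?_, ?_⟩
    · intro E hE
      rcases List.mem_cons.mp hE with rfl | hE'
      · exact LinearMap.mem_ker.mp ha'K
      · exact ha'0 E hE'
    · have heq : s - a' = (a - a') + D b := by rw [hab]; abel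
      rw [heq]
      exact I.add_mem ha'I (hSI D hDl b hbS)

end WDIAux

section WDILie

variable {F : Type} [Field F] {L V : Type}
    [LieRing L] [LieAlgebra F L] [AddCommGroup V] [Module F V]
    [LieRingModule L V] [LieModule F L V]

/-- The linear map sending `v` to the inner derivation `x ↦ ⁅x, v⁆`. -/
def wdiInner : V →ₗ[F] (L →ₗ[F] V) where
  toFun v :=
  { toFun := fun x => ⁅x, v⁆
    map_add' := fun x y => add_lie x y v
    map_smul' := fun c x => smul_lie c x v }
  map_add' v w := by ext x; simp [lie_add]
  map_smul' c v := by ext x; simp [lie_smul]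

@[simp] lemma wdiInner_apply (v : V) (x : L) : (wdiInner (F := F) (L := L) v) x = ⁅x, v⁆ := rfl

/-- The action of `z : L` on `Hom(L, V)`. -/
def wdiD (z : L) : Module.End F (L →ₗ[F] V) where
  toFun f :=
  { toFun := fun x => ⁅z, f x⁆ - f ⁅z, x⁆
    map_add' := fun x y => by simp [lie_add]; abel
    map_smul' := fun c x => by simp [lie_smul, smul_sub] }
  map_add' f g := by ext x; simp; abel
  map_smul' c f := by ext x; simp [lie_smul, smul_sub]

@[simp] lemma wdiD_apply (z : L) (f : L →ₗ[F] V) (x : L) :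
    (wdiD (F := F) z f) x = ⁅z, f x⁆ - f ⁅z, x⁆ := rfl

/-- The submodule of derivations `L → V`. -/
def wdiDer (F L V : Type) [Field F] [LieRing L] [LieAlgebra F L] [AddCommGroup V] [Module F V]
    [LieRingModule L V] [LieModule F L V] : Submodule F (L →ₗ[F] V) where
  carrier := {f | ∀ x y : L, f ⁅x, y⁆ = ⁅x, f y⁆ - ⁅y, f x⁆}
  add_mem' := fun hf hg x y => by simp [hf x y, hg x y, lie_add]; abel
  zero_mem' := fun x y => by simp
  smul_mem' := fun c f hf x y => by simp [hf x y, lie_smul, smul_sub]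

lemma wdiInner_mem_der (v : V) : wdiInner (F := F) (L := L) v ∈ wdiDer F L V := by
  intro x y
  simp [lie_lie]

lemma wdiD_eq_inner {f : L →ₗ[F] V} (hf : f ∈ wdiDer F L V) (z : L) :
    wdiD (F := F) z f = wdiInner (f z) := by
  ext x
  simp [hf z x]

lemma wdiD_commute {a b : L} (hab : ⁅a, b⁆ = 0) :
    Commute (wdiD (F := F) (V := V) a) (wdiD b) := by
  have swapV : ∀ m : V, ⁅a, ⁅b, m⁆⁆ = ⁅b, ⁅a, m⁆⁆ := by
    intro m; rw [leibniz_lie, hab, zero_lie, zero_add]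
  have swapL : ∀ x : L, ⁅a, ⁅b, x⁆⁆ = ⁅b, ⁅a, x⁆⁆ := by
    intro x; rw [leibniz_lie, hab, zero_lie, zero_add]
  apply LinearMap.ext; intro f
  apply LinearMap.ext; intro x
  simp only [Module.End.mul_apply, wdiD_apply, map_sub, lie_sub]
  rw [swapV (f x), swapL x]
  abel

lemma wdi_span_top [FiniteDimensional F L] [FiniteDimensional F V]
    (T : LieSubalgebra F L)
    (hLdec : ∀ x : L, x ∈ Submodule.span F
      {y : L | ∃ β : T → F, ∀ h : T, ⁅(h : L), y⁆ = β h • y})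
    (hVdec : ∀ v : V, v ∈ Submodule.span F
      {w : V | ∃ β : T → F, ∀ h : T, ⁅(h : L), w⁆ = β h • w})
    (f : L →ₗ[F] V) :
    f ∈ Submodule.span F
      {g : L →ₗ[F] V | ∃ lam : T → F, ∀ h : T, wdiD (↑h) g = lam h • g} := by
  classical
  set SL := {y : L | ∃ β : T → F, ∀ h : T, ⁅(h : L), y⁆ = β h • y} with hSL
  set SV := {w : V | ∃ β : T → F, ∀ h : T, ⁅(h : L), w⁆ = β h • w} with hSV
  have hSLtop : Submodule.span F SL = ⊤ := by
    rw [Submodule.eq_top_iff']; exact hLdec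
  have hSVtop : Submodule.span F SV = ⊤ := by
    rw [Submodule.eq_top_iff']; exact hVdec
  obtain ⟨tL, htLsub, htLspan, htLli⟩ := exists_linearIndependent F SL
  obtain ⟨tV, htVsub, htVspan, htVli⟩ := exists_linearIndependent F SV
  let BL : Module.Basis tL F L := Module.Basis.mk htLli
    (by rw [Subtype.range_coe, htLspan, hSLtop])
  let BV : Module.Basis tV F V := Module.Basis.mk htVli
    (by rw [Subtype.range_coe, htVspan, hSVtop])
  haveI : Fintype tL := FiniteDimensional.fintypeBasisIndex BL
  haveI : Fintype tV := FiniteDimensional.fintypeBasisIndex BV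
  have hβ : ∀ i : tL, ∃ β : T → F, ∀ h : T, ⁅(h : L), BL i⁆ = β h • BL i := by
    intro i
    obtain ⟨β, hb⟩ := htLsub i.2
    exact ⟨β, fun h => by rw [Module.Basis.mk_apply]; exact hb h⟩
  have hγ : ∀ j : tV, ∃ γ : T → F, ∀ h : T, ⁅(h : L), BV j⁆ = γ h • BV j := by
    intro j
    obtain ⟨γ, hg⟩ := htVsub j.2
    exact ⟨γ, fun h => by rw [Module.Basis.mk_apply]; exact hg h⟩
  choose β hβ using hβ
  choose γ hγ using hγ
  let eij : tL → tV → (L →ₗ[F] V) := fun i j => (BL.coord i).smulRight (BV j)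
  have heig : ∀ (i : tL) (j : tV) (h : T),
      wdiD (F := F) (↑h) (eij i j) = (γ j h - β i h) • eij i j := by
    intro i j h
    apply BL.ext
    intro k
    simp only [wdiD_apply, LinearMap.smul_apply, eij, LinearMap.smulRight_apply,
      Module.Basis.coord_apply, hβ k h, map_smul, Module.Basis.repr_self, smul_smul, lie_smul, hγ j h]
    by_cases hki : k = i
    · subst hki
      simp only [Finsupp.single_eq_same, one_smul, smul_smul, one_mul, mul_one]
      rw [sub_smul]
    · rw [Finsupp.single_apply, if_neg hki]
      simp
  have hrep : f = ∑ i : tL, ∑ j : tV, (BV.repr (f (BL i)) j) • eij i j := by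
    apply BL.ext
    intro k
    simp only [LinearMap.sum_apply, LinearMap.smul_apply, eij, LinearMap.smulRight_apply,
      Module.Basis.coord_apply, Module.Basis.repr_self]
    rw [Finset.sum_eq_single k]
    · simp only [Finsupp.single_eq_same, one_smul]
      exact (BV.sum_repr (f (BL k))).symm
    · intro i _ hik
      apply Finset.sum_eq_zero
      intro j _
      rw [Finsupp.single_apply, if_neg (fun h => hik h.symm)]
      simp
    · intro h; exact absurd (Finset.mem_univ k) h
  rw [hrep]
  apply Submodule.sum_mem
  intro i _
  apply Submodule.sum_mem
  intro j _
  apply Submodule.smul_mem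
  apply Submodule.subset_span
  exact ⟨fun h => γ j h - β i h, fun h => heig i j h⟩

lemma wdi_diag [FiniteDimensional F L] [FiniteDimensional F V]
    (T : LieSubalgebra F L)
    (hLdec : ∀ x : L, x ∈ Submodule.span F
      {y : L | ∃ β : T → F, ∀ h : T, ⁅(h : L), y⁆ = β h • y})
    (hVdec : ∀ v : V, v ∈ Submodule.span F
      {w : V | ∃ β : T → F, ∀ h : T, ⁅(h : L), w⁆ = β h • w})
    (h : T) (f : L →ₗ[F] V) :
    f ∈ ⨆ μ : F, (wdiD (F := F) (V := V) (↑h : L)).eigenspace μ := by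
  have hmem := wdi_span_top T hLdec hVdec f
  refine Submodule.span_le.mpr ?_ hmem
  rintro g ⟨lam, hg⟩
  exact Submodule.mem_iSup_of_mem (lam h) (Module.End.mem_eigenspace_iff.mpr (hg h))

end WDILie

/-- nonzero-weight derivations are inner; every derivation is inner modulo a
zero-weight derivation. -/
theorem weight_derivation_inner (F : Type) [Field F] (L V : Type)
    [LieRing L] [LieAlgebra F L] [AddCommGroup V] [Module F V]
    [LieRingModule L V] [LieModule F L V]
    [FiniteDimensional F L] [FiniteDimensional F V]
    (T : LieSubalgebra F L) (hT : IsLieAbelian T)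
    (gL : ℤ → Submodule F L) (gV : ℤ → Submodule F V)
    (hgL : ∀ x : L, x ∈ ⨆ k, gL k) (hgV : ∀ v : V, v ∈ ⨆ k, gV k)
    (hT0 : T.toSubmodule ≤ gL 0)
    (hLdec : ∀ x : L, x ∈ Submodule.span F
      {y : L | ∃ β : T → F, ∀ h : T, ⁅(h : L), y⁆ = β h • y})
    (hVdec : ∀ v : V, v ∈ Submodule.span F
      {w : V | ∃ β : T → F, ∀ h : T, ⁅(h : L), w⁆ = β h • w}) :
    (∀ (φ : L →ₗ[F] V), (∀ x y : L, φ ⁅x, y⁆ = ⁅x, φ y⁆ - ⁅y, φ x⁆) →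
      ∀ (α : T →ₗ[F] F), α ≠ 0 →
      (∀ (h : T) (x : L), ⁅(h : L), φ x⁆ - φ ⁅(h : L), x⁆ = α h • φ x) →
      ∃ v : V, ∀ x : L, φ x = ⁅x, v⁆) ∧
    (∀ (φ : L →ₗ[F] V), (∀ x y : L, φ ⁅x, y⁆ = ⁅x, φ y⁆ - ⁅y, φ x⁆) →
      ∃ (v : V) (ψ : L →ₗ[F] V),
        (∀ x y : L, ψ ⁅x, y⁆ = ⁅x, ψ y⁆ - ⁅y, ψ x⁆) ∧
        (∀ (h : T) (x : L), ⁅(h : L), ψ x⁆ = ψ ⁅(h : L), x⁆) ∧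
        (∀ x : L, φ x = ψ x + ⁅x, v⁆)) := by
  constructor
  · -- Part 1: nonzero-weight derivations are inner
    intro φ hder α hα hw
    have hex : ∃ h : T, α h ≠ 0 := by
      by_contra hc
      push_neg at hc
      exact hα (LinearMap.ext fun h => hc h)
    obtain ⟨h0, hh0⟩ := hex
    set h1 : T := (α h0)⁻¹ • h0 with hh1
    have hα1 : α h1 = 1 := by
      rw [hh1, map_smul, smul_eq_mul, inv_mul_cancel₀ hh0]
    refine ⟨φ ↑h1, fun x => ?_⟩
    have hw1 := hw h1 x
    rw [hα1, one_smul, hder (↑h1 : L) x] at hw1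
    rw [← hw1]
    abel
  · -- Part 2: modulo inner derivations, every derivation has weight zero
    intro φ hder
    haveI : FiniteDimensional F T := inferInstance
    set n := Module.finrank F T with hn
    set bT : Module.Basis (Fin n) F T := Module.finBasis F T with hbT
    set lD : List (Module.End F (L →ₗ[F] V)) :=
      (List.finRange n).map (fun i => wdiD (F := F) (↑(bT i) : L)) with hlD
    have hform : ∀ D ∈ lD, ∃ h : T, D = wdiD (F := F) (V := V) (↑h : L) := by
      intro D hD
      rw [hlD, List.mem_map] at hD
      obtain ⟨i, _, rfl⟩ := hD
      exact ⟨bT i, rfl⟩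
    have habel : ∀ (h h' : T), ⁅(↑h : L), (↑h' : L)⁆ = 0 := by
      intro h h'
      have h0 : ⁅h, h'⁆ = 0 := trivial_lie_zero _ _ h h'
      rw [← LieSubalgebra.coe_bracket, h0]
      rfl
    have hφDer : φ ∈ wdiDer F L V := hder
    obtain ⟨ψ, hψDer, hψ0, hψI⟩ := wdi_keyB lD (wdiDer F L V)
      (LinearMap.range (wdiInner (F := F) (L := L) (V := V)))
      (by
        intro D hD E hE
        obtain ⟨h, rfl⟩ := hform D hD
        obtain ⟨h', rfl⟩ := hform E hE
        exact wdiD_commute (habel h h'))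
      (by
        intro D hD
        obtain ⟨h, rfl⟩ := hform D hD
        exact fun u => wdi_diag T hLdec hVdec h u)
      (by
        intro D hD u hu
        obtain ⟨h, rfl⟩ := hform D hD
        rw [wdiD_eq_inner hu]
        exact wdiInner_mem_der _)
      (by
        intro D hD u hu
        obtain ⟨h, rfl⟩ := hform D hD
        rw [wdiD_eq_inner hu]
        exact ⟨u ↑h, rfl⟩)
      φ hφDer
    obtain ⟨v, hv⟩ := hψI
    -- ψ has weight zero for every element of T, by linearity from the basis
    let ℓ : L →ₗ[F] (L →ₗ[F] V) :=
    { toFun := fun z => wdiD (F := F) z ψ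
      map_add' := fun z w => by ext x; simp [add_lie, lie_add]; abel
      map_smul' := fun c z => by ext x; simp [smul_lie, lie_smul, smul_sub] }
    have hbasis0 : ∀ i : Fin n, ℓ (↑(bT i) : L) = 0 := by
      intro i
      exact hψ0 _ (by rw [hlD, List.mem_map]; exact ⟨i, List.mem_finRange i, rfl⟩)
    have hT0' : ∀ h : T, ℓ (↑h : L) = 0 := by
      intro h
      have hcomp : (ℓ.comp T.incl.toLinearMap) = 0 := by
        apply bT.ext
        intro i
        simpa using hbasis0 i
      simpa using LinearMap.congr_fun hcomp h
    refine ⟨v, ψ, hψDer, ?_, ?_⟩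
    · intro h x
      have h2 : ⁅(↑h : L), ψ x⁆ - ψ ⁅(↑h : L), x⁆ = 0 := LinearMap.congr_fun (hT0' h) x
      exact sub_eq_zero.mp h2
    · intro x
      have h2 : ⁅x, v⁆ = φ x - ψ x := LinearMap.congr_fun hv x
      rw [eq_comm, sub_eq_iff_eq_add'] at h2
      exact h2
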